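/- Let φ be a setfunction on a finite set algebra (J, 𝓑). For integers a ≥ k ≥ 1, T_k(φ) = Q_k(T_a(φ)), where Q_k(T_a(φ)) denotes the union over ψ ∈ T_a(φ) of Q_k(ψ). That is, every k-crop of φ is a k-quotient of some a-crop of φ, and conversely. -/

import Mathlib

/-- The `k`-crop of a setfunction `φ` along a tuple `A` of sets:
`(φ/A)(I) = φ(⋃_{i∈I} A_i)`. -/
def cropFn {J : Type*} (φ : Set J → ℝ) {k : ℕ} (A : Fin k → Set J) :
    Finset (Fin k) → ℝ :=
  fun I => φ (⋃ i ∈ I, A i)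

/-- The set `T_k(φ)` of `k`-crops of `φ`, over tuples of sets from the family `B`. -/
def crops {J : Type*} (B : Set (Set J)) (φ : Set J → ℝ) (k : ℕ) :
    Set (Finset (Fin k) → ℝ) :=
  {ψ | ∃ A : Fin k → Set J, (∀ i, A i ∈ B) ∧ ψ = cropFn φ A}

/-- The set `T_k(ψ)` of `k`-crops of a setfunction `ψ : 2^[a] → ℝ`. -/
def cropsFin {a : ℕ} (ψ : Finset (Fin a) → ℝ) (k : ℕ) :
    Set (Finset (Fin k) → ℝ) :=
  {σ | ∃ P : Fin k → Finset (Fin a), σ = fun I => ψ (I.biUnion P)}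

/-- The set `Q_k(ψ)` of `k`-quotients of a setfunction `ψ : 2^[a] → ℝ`, defined using
partitions of `[a]` into `k` (possibly empty) classes. -/
def quotientsFin {a : ℕ} (ψ : Finset (Fin a) → ℝ) (k : ℕ) :
    Set (Finset (Fin k) → ℝ) :=
  {σ | ∃ P : Fin k → Finset (Fin a), Pairwise (Function.onFun Disjoint P) ∧
      Finset.univ.biUnion P = Finset.univ ∧ σ = fun I => ψ (I.biUnion P)}

/-- For a setfunction `φ` on a finite set algebra `(J, B)` and
`a ≥ k ≥ 1`, we have `T_k(φ) = Q_k(T_a(φ))`. -/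
theorem stmt2 {J : Type*} [Finite J] (B : Set (Set J)) (φ : Set J → ℝ)
    (hempty : ∅ ∈ B) (huniv : Set.univ ∈ B)
    (hunion : ∀ X Y, X ∈ B → Y ∈ B → X ∪ Y ∈ B)
    (hinter : ∀ X Y, X ∈ B → Y ∈ B → X ∩ Y ∈ B)
    (hcompl : ∀ X, X ∈ B → Xᶜ ∈ B)
    (hφ : φ ∅ = 0)
    (a k : ℕ) (hk : 1 ≤ k) (hka : k ≤ a) :
    crops B φ k = ⋃ ψ ∈ crops B φ a, quotientsFin ψ k := by
  have hbU : ∀ {ι : Type} [DecidableEq ι] (S : Finset ι) (A : ι → Set J),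
      (∀ i, A i ∈ B) → (⋃ j ∈ S, A j) ∈ B := by
    intro ι _ S A hA
    induction S using Finset.induction with
    | empty => simpa using hempty
    | insert _ _ hx ih =>
      rw [Finset.set_biUnion_insert]
      exact hunion _ _ (hA _) ih
  ext σ
  simp only [Set.mem_iUnion, exists_prop]
  constructor
  · rintro ⟨C, hC, rfl⟩
    -- map Fin a onto Fin k
    set f : Fin a → Fin k := fun j => if h : (j : ℕ) < k then ⟨j, h⟩ else ⟨0, hk⟩ with hf
    have hfsurj : Function.Surjective f := by
      intro i
      refine ⟨⟨i, lt_of_lt_of_le i.2 hka⟩, ?_⟩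
      simp [hf, i.2]
    refine ⟨cropFn φ (C ∘ f), ⟨C ∘ f, fun j => hC (f j), rfl⟩,
      fun i => Finset.univ.filter (fun j => f j = i), ?_, ?_, ?_⟩
    · intro i i' hii'
      simp only [Function.onFun, Finset.disjoint_filter]
      rintro j _ rfl h
      exact hii' h
    · ext j
      simp only [Finset.mem_biUnion, Finset.mem_filter, Finset.mem_univ, true_and,
        iff_true]
      exact ⟨f j, rfl⟩
    · funext I
      show φ _ = φ _
      congr 1
      ext x
      simp only [Set.mem_iUnion, Finset.mem_biUnion, Finset.mem_filter, Finset.mem_univ,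
        true_and, Function.comp]
      constructor
      · rintro ⟨i, hi, hx⟩
        obtain ⟨j, rfl⟩ := hfsurj i
        exact ⟨j, ⟨f j, hi, rfl⟩, hx⟩
      · rintro ⟨j, ⟨i, hi, hji⟩, hx⟩
        exact ⟨i, hi, hji ▸ hx⟩
  · rintro ⟨ψ, ⟨A, hA, rfl⟩, P, _, _, rfl⟩
    refine ⟨fun i => ⋃ j ∈ P i, A j, fun i => hbU _ _ hA, ?_⟩
    funext I
    show φ _ = φ _
    rw [Finset.set_biUnion_biUnion]
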